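/- arXiv:math/9505207 — 5 statements merged into one kernel-verified Lean document; each statement's English description precedes it below -/
import Mathlib

section
/- Let q ≥ 2 be an integer and let P be a polynomial over ℂ of degree q+1 satisfying: (1) the derivative P′ has exactly two roots, namely −q, which is a root of P′ of multiplicity q−1, and one further point ω ∈ ℂ with ω ≠ −q, which is a simple root of P′; (2) P(0) = 0; (3) P(−q) = 0. Then there exists λ ∈ ℂ with λ ≠ 0 such that P(z) = λ·z·(1+z/q)^q for all z ∈ ℂ. -/
open Polynomial

/-- Any polynomial of degree `q+1` (with `q ≥ 2`) of type `E_q` — i.e. whose derivative has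
exactly two roots, namely `-q` of multiplicity `q-1` and a further simple root `ω ≠ -q`,
and which vanishes at `0` and at `-q` — is of the form `λ·z·(1+z/q)^q` for some `λ ≠ 0`. -/
theorem stmt1 (q : ℕ) (hq : 2 ≤ q) (P : Polynomial ℂ) (ω : ℂ)
    (hdeg : P.degree = (q + 1 : ℕ))
    (hω : ω ≠ -(q : ℂ))
    (hroots : ∀ z : ℂ, (derivative P).IsRoot z ↔ z = -(q : ℂ) ∨ z = ω)
    (hmult₁ : (derivative P).rootMultiplicity (-(q : ℂ)) = q - 1)
    (hmult₂ : (derivative P).rootMultiplicity ω = 1)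
    (h0 : P.eval 0 = 0)
    (hq0 : P.eval (-(q : ℂ)) = 0) :
    ∃ lam : ℂ, lam ≠ 0 ∧ ∀ z : ℂ, P.eval z = lam * z * (1 + z / (q : ℂ)) ^ q := by
  have hqc : (q : ℂ) ≠ 0 := Nat.cast_ne_zero.mpr (by omega)
  have hPne : P ≠ 0 := by
    apply zero_le_degree_iff.mp
    rw [hdeg]
    exact_mod_cast Nat.zero_le _
  have hroot : P.IsRoot (-(q : ℂ)) := hq0
  have hder := derivative_rootMultiplicity_of_root hroot
  have h1 : 1 ≤ P.rootMultiplicity (-(q : ℂ)) :=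
    (rootMultiplicity_pos hPne).mpr hroot
  have hm : P.rootMultiplicity (-(q : ℂ)) = q := by
    rw [hmult₁] at hder; omega
  have hdvd1 : (X - C (-(q : ℂ))) ^ q ∣ P := by
    have h := P.pow_rootMultiplicity_dvd (-(q : ℂ))
    rwa [hm] at h
  have hdvd0 : (X - C (0 : ℂ)) ∣ P := dvd_iff_isRoot.mpr h0
  have hne : (0 : ℂ) ≠ -(q : ℂ) := by
    intro h
    exact hqc (neg_eq_zero.mp h.symm)
  have hco : IsCoprime (X - C (0 : ℂ)) ((X - C (-(q : ℂ))) ^ q) :=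
    (isCoprime_X_sub_C_of_isUnit_sub (by simpa using (sub_ne_zero_of_ne hne).isUnit)).pow_right
  obtain ⟨r, hr⟩ := hco.mul_dvd hdvd0 hdvd1
  have hDdeg : ((X - C (0 : ℂ)) * (X - C (-(q : ℂ))) ^ q).degree = ((q + 1 : ℕ) : WithBot ℕ) := by
    rw [degree_mul, degree_pow, degree_X_sub_C, degree_X_sub_C]
    push_cast
    ring
  have hrne : r ≠ 0 := by
    intro h; rw [h, mul_zero] at hr; exact hPne hr
  have hrdeg : r.natDegree = 0 := by
    have h2 := hdeg
    rw [hr, degree_mul, hDdeg, degree_eq_natDegree hrne] at h2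
    have h4 : q + 1 + r.natDegree = q + 1 := by exact_mod_cast h2
    omega
  obtain ⟨c, hc⟩ := natDegree_eq_zero.mp hrdeg
  have hcne : c ≠ 0 := by
    intro h; rw [h, map_zero] at hc; exact hrne hc.symm
  refine ⟨c * (q : ℂ) ^ q, mul_ne_zero hcne (pow_ne_zero _ hqc), fun z => ?_⟩
  have hz : P.eval z = (z - 0) * (z - (-(q : ℂ))) ^ q * c := by
    rw [hr, ← hc]; simp [eval_mul, eval_pow]
  rw [hz]
  have hfrac : 1 + z / (q : ℂ) = (z - (-(q : ℂ))) / (q : ℂ) := by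
    field_simp; ring
  rw [hfrac, div_pow, sub_zero]
  field_simp
end

section
/- Let q ≥ 3 be an integer and let λ, λ′ ∈ ℂ with λ ≠ 0 and λ′ ≠ 0. Suppose there exist a, b ∈ ℂ with a ≠ 0 such that the affine map A(z) = a·z + b conjugates P_{q,λ} to P_{q,λ′}, i.e. A(P_{q,λ}(z)) = P_{q,λ′}(A(z)) for all z ∈ ℂ. Then λ = λ′ (indeed A is the identity, i.e. a = 1 and b = 0). -/
open Polynomial


/-- For `q ≥ 3`, if an affine map `A(z) = a·z + b` (with `a ≠ 0`) conjugates
`P_{q,λ}(z) = λ·z·(1+z/q)^q` to `P_{q,λ'}`, then `λ = λ'` and `A` is the identity. -/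
theorem stmt2 (q : ℕ) (hq : 3 ≤ q) (lam lam' : ℂ) (hlam : lam ≠ 0) (hlam' : lam' ≠ 0)
    (a b : ℂ) (ha : a ≠ 0)
    (hconj : ∀ z : ℂ,
      a * (lam * z * (1 + z / (q : ℂ)) ^ q) + b
        = lam' * (a * z + b) * (1 + (a * z + b) / (q : ℂ)) ^ q) :
    lam = lam' ∧ a = 1 ∧ b = 0 := by
  obtain ⟨m, rfl⟩ : ∃ m, q = m + 3 := ⟨q - 3, by omega⟩
  set Q : ℂ := ((m + 3 : ℕ) : ℂ) with hQdef
  have hQ : Q ≠ 0 := Nat.cast_ne_zero.mpr (by omega)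
  set β : ℂ := b / a with hβdef
  set γ : ℂ := (Q + b) / a with hγdef
  have heval : ∀ z : ℂ,
      (C (a * lam) * ((X + C 0) * (X + C Q) ^ (m + 3)) + C (b * Q ^ (m + 3))).eval z
        = (C (lam' * a ^ (m + 3 + 1)) * ((X + C β) * (X + C γ) ^ (m + 3)) + C 0).eval z := by
    intro z
    have h := hconj z
    have e1 : (1 + z / Q) ^ (m+3) * Q ^ (m+3) = (z + Q) ^ (m+3) := by
      rw [← mul_pow]; congr 1; field_simp; ring
    have e2 : (1 + (a * z + b) / Q) ^ (m+3) * Q ^ (m+3) = (a * z + b + Q) ^ (m+3) := by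
      rw [← mul_pow]; congr 1; field_simp; ring
    have hL : (a * (lam * z * (1 + z / Q) ^ (m+3)) + b) * Q ^ (m+3)
        = a * lam * z * (z + Q) ^ (m+3) + b * Q ^ (m+3) := by
      rw [add_mul]; congr 1
      calc a * (lam * z * (1 + z / Q) ^ (m+3)) * Q ^ (m+3)
          = a * lam * z * ((1 + z / Q) ^ (m+3) * Q ^ (m+3)) := by ring
        _ = a * lam * z * (z + Q) ^ (m+3) := by rw [e1]
    have hR : lam' * (a * z + b) * (1 + (a * z + b) / Q) ^ (m+3) * Q ^ (m+3)
        = lam' * (a * z + b) * (a * z + b + Q) ^ (m+3) := by rw [mul_assoc, e2]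
    have h2 := congrArg (· * Q ^ (m+3)) h
    have h' : a * lam * z * (z + Q) ^ (m+3) + b * Q ^ (m+3)
        = lam' * (a * z + b) * (a * z + b + Q) ^ (m+3) := hL.symm.trans (h2.trans hR)
    have k1 : a * (z + β) = a * z + b := by rw [hβdef]; field_simp
    have k2 : a * (z + γ) = a * z + b + Q := by rw [hγdef]; field_simp; ring
    have e3 : a ^ (m + 3 + 1) * ((z + β) * (z + γ) ^ (m+3))
        = (a * z + b) * (a * z + b + Q) ^ (m+3) := by
      calc a ^ (m + 3 + 1) * ((z + β) * (z + γ) ^ (m+3))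
          = (a * (z + β)) * (a ^ (m+3) * (z + γ) ^ (m+3)) := by ring
        _ = (a * (z + β)) * (a * (z + γ)) ^ (m+3) := by rw [mul_pow]
        _ = (a * z + b) * (a * z + b + Q) ^ (m+3) := by rw [k1, k2]
    simp only [eval_add, eval_mul, eval_pow, eval_C, eval_X, add_zero]
    calc a * lam * (z * (z + Q) ^ (m+3)) + b * Q ^ (m+3)
        = a * lam * z * (z + Q) ^ (m+3) + b * Q ^ (m+3) := by ring
      _ = lam' * (a * z + b) * (a * z + b + Q) ^ (m+3) := h'
      _ = lam' * (a ^ (m + 3 + 1) * ((z + β) * (z + γ) ^ (m+3))) := by rw [e3]; ring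
      _ = lam' * a ^ (m + 3 + 1) * ((z + β) * (z + γ) ^ (m+3)) := by ring
  have hp : C (a * lam) * ((X + C 0) * (X + C Q) ^ (m + 3)) + C (b * Q ^ (m + 3))
      = C (lam' * a ^ (m + 3 + 1)) * ((X + C β) * (X + C γ) ^ (m + 3)) + C 0 :=
    Polynomial.funext heval
  have key : ∀ (c β' γ' d : ℂ) (k : ℕ),
      (C c * ((X + C β') * (X + C γ') ^ (m + 3)) + C d).coeff (k + 1)
        = c * (γ' ^ (m + 3 - k) * ((m + 3).choose k : ℂ)
            + β' * (γ' ^ (m + 3 - (k + 1)) * ((m + 3).choose (k + 1) : ℂ))) := by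
    intro c β' γ' d k
    rw [coeff_add, coeff_C, if_neg (Nat.succ_ne_zero k), add_zero, coeff_C_mul, add_mul,
      coeff_add, coeff_X_mul, coeff_C_mul, coeff_X_add_C_pow, coeff_X_add_C_pow]
  -- choose facts
  have hch0 : (m+3).choose (m+3+1) = 0 := Nat.choose_eq_zero_of_lt (by omega)
  have hch1 : (m+3).choose (m+2) = m+3 := by
    rw [show m+2 = m+3-1 by omega, Nat.choose_symm (by omega), Nat.choose_one_right]
  have hch2 : (m+3).choose (m+1) = (m+3).choose 2 := by
    rw [show m+1 = m+3-2 by omega, Nat.choose_symm (by omega)]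
  have hch3 : (m+3).choose m = (m+3).choose 3 := by
    have h := Nat.choose_symm (show 3 ≤ m+3 by omega)
    rw [show m+3-3 = m by omega] at h
    exact h
  have ht : a * lam ≠ 0 := mul_ne_zero ha hlam
  have E1 : a * lam = lam' * a ^ (m + 3 + 1) := by
    have h := congrArg (fun p => p.coeff (m + 3 + 1)) hp
    simp only [key] at h
    simp only [Nat.sub_self, Nat.choose_self, Nat.cast_one, pow_zero,
      show m+3-(m+3+1) = 0 by omega, hch0, Nat.cast_zero, mul_zero, zero_mul,
      add_zero, mul_one, one_mul] at h
    exact h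
  have F2 : Q * Q = γ * Q + β := by
    have h := congrArg (fun p => p.coeff (m + 2 + 1)) hp
    simp only [key] at h
    simp only [show m+3-(m+2) = 1 by omega, show m+3-(m+2+1) = 0 by omega, hch1,
      show m+2+1 = m+3 by omega, Nat.choose_self, Nat.cast_one, pow_one, pow_zero,
      mul_one, one_mul, zero_mul, add_zero] at h
    rw [← hQdef, ← E1] at h
    exact mul_left_cancel₀ ht h
  have F3 : Q^2 * (((m+3).choose 2 : ℕ) : ℂ)
      = γ^2 * (((m+3).choose 2 : ℕ) : ℂ) + β * (γ * Q) := by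
    have h := congrArg (fun p => p.coeff (m + 1 + 1)) hp
    simp only [key] at h
    simp only [show m+3-(m+1) = 2 by omega, show m+3-(m+1+1) = 1 by omega, hch2,
      show m+1+1 = m+2 by omega, hch1, pow_one, zero_mul, add_zero] at h
    rw [← hQdef, ← E1] at h
    exact mul_left_cancel₀ ht h
  have F4 : Q^3 * (((m+3).choose 3 : ℕ) : ℂ)
      = γ^3 * (((m+3).choose 3 : ℕ) : ℂ) + β * (γ^2 * (((m+3).choose 2 : ℕ) : ℂ)) := by
    have h := congrArg (fun p => p.coeff (m + 1)) hp
    simp only [key] at h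
    simp only [show m+3-m = 3 by omega, show m+3-(m+1) = 2 by omega, hch3, hch2,
      zero_mul, add_zero] at h
    rw [← E1] at h
    exact mul_left_cancel₀ ht h
  -- numeric values of binomials
  have hrel2 : 2 * (((m+3).choose 2 : ℕ) : ℂ) = Q * (Q - 1) := by
    have hn : (m+3).choose 2 * 2 = (m+3) * (m+2) := by
      have h := Nat.choose_succ_right_eq (m+3) 1
      rw [Nat.choose_one_right, show m+3-1 = m+2 by omega] at h
      exact h
    have hc := congrArg (fun n : ℕ => (n : ℂ)) hn
    push_cast at hc
    rw [hQdef]; push_cast; linear_combination hc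
  have hrel3 : 3 * (((m+3).choose 3 : ℕ) : ℂ) = (((m+3).choose 2 : ℕ) : ℂ) * (Q - 2) := by
    have hn : (m+3).choose 3 * 3 = (m+3).choose 2 * (m+1) := by
      have h := Nat.choose_succ_right_eq (m+3) 2
      rw [show m+3-2 = m+1 by omega] at h
      exact h
    have hc := congrArg (fun n : ℕ => (n : ℂ)) hn
    push_cast at hc
    rw [hQdef]; push_cast; linear_combination hc
  have hQ1 : Q + 1 ≠ 0 := by
    rw [show Q + 1 = ((m+4:ℕ):ℂ) by rw [hQdef]; push_cast; ring]
    exact Nat.cast_ne_zero.mpr (by omega)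
  have hQm1 : Q - 1 ≠ 0 := by
    rw [show Q - 1 = ((m+2:ℕ):ℂ) by rw [hQdef]; push_cast; ring]
    exact Nat.cast_ne_zero.mpr (by omega)
  have hsplit : (Q - γ) * (Q*(Q-1) - γ*(Q+1)) = 0 := by
    refine mul_left_cancel₀ hQ ?_
    rw [mul_zero]
    linear_combination (2:ℂ)*F3 - (Q^2-γ^2)*hrel2 - 2*γ*Q*F2
  rcases mul_eq_zero.mp hsplit with hA | hB
  · -- identity case
    have hγQ : γ = Q := by linear_combination (-1:ℂ) * hA
    have hβ0 : β = 0 := by linear_combination (-1:ℂ)*F2 + Q*hA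
    have hb : b = 0 := by
      have hba : b = a * β := by rw [hβdef]; field_simp
      rw [hba, hβ0, mul_zero]
    have ha1 : a = 1 := by
      have h1 : a * γ = Q + b := by rw [hγdef]; field_simp
      rw [hγQ, hb, add_zero] at h1
      exact mul_right_cancel₀ hQ (by rw [h1, one_mul])
    refine ⟨?_, ha1, hb⟩
    rw [ha1, one_mul, one_pow, mul_one] at E1
    exact E1
  · -- swap case: contradiction
    exfalso
    have hγv : γ = Q*(Q-1)/(Q+1) := by
      rw [eq_div_iff hQ1]; linear_combination (-1:ℂ)*hB
    have hβv : β = 2*Q^2/(Q+1) := by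
      rw [eq_div_iff hQ1]
      linear_combination (-(Q:ℂ)-1)*F2 + Q*hB
    have hc2v : (((m+3).choose 2 : ℕ) : ℂ) = Q*(Q-1)/2 := by linear_combination hrel2/2
    have hc3v : (((m+3).choose 3 : ℕ) : ℂ) = Q*(Q-1)*(Q-2)/6 := by
      linear_combination hrel3/3 + (Q-2)/3 * hc2v
    rw [hβv, hγv, hc2v, hc3v] at F4
    field_simp at F4
    have hcon : (48:ℂ) * Q^4 * (Q-1) * (Q+1)^4 = 0 := by linear_combination (-12 * Q^4 * (Q-1) * (Q+1)^3) * F4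
    have hne : (48:ℂ) * Q^4 * (Q-1) * (Q+1)^4 ≠ 0 := by
      refine mul_ne_zero (mul_ne_zero (mul_ne_zero (by norm_num) (pow_ne_zero _ hQ)) hQm1)
        (pow_ne_zero _ hQ1)
    exact hne hcon
end

section
/- Fix an integer q ≥ 1, a real number η > 0, and a real number s with 0 < s < 1/(2η(2^q − 1)). For n ∈ ℕ and θ ∈ ℝ let S_n^s(θ) = {(ρ,t) ∈ ℝ² : 0 ≤ ρ ≤ η/2^n and |t − θ| ≤ s·ρ}. Then the truncated sectors S_n^s(m/(2^n(2^q−1))) indexed by pairs (n,m) with n ∈ ℕ and m ∈ ℤ odd are pairwise disjoint: if (n,m) ≠ (n′,m′) with m and m′ odd integers, then S_n^s(m/(2^n(2^q−1))) and S_{n′}^s(m′/(2^{n′}(2^q−1))) are disjoint. -/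
private lemma aux6 (q : ℕ) (hq : 1 ≤ q) (η s : ℝ) (hη : 0 < η)
    (hs : 0 < s) (hs' : s < 1 / (2 * η * ((2 : ℝ) ^ q - 1)))
    (n n' : ℕ) (hnn : n ≤ n') (m m' : ℤ) (hm : Odd m) (hm' : Odd m')
    (hne : (n, m) ≠ (n', m')) :
    Disjoint
      {p : ℝ × ℝ | 0 ≤ p.1 ∧ p.1 ≤ η / 2 ^ n ∧
        |p.2 - (m : ℝ) / (2 ^ n * ((2 : ℝ) ^ q - 1))| ≤ s * p.1}
      {p : ℝ × ℝ | 0 ≤ p.1 ∧ p.1 ≤ η / 2 ^ n' ∧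
        |p.2 - (m' : ℝ) / (2 ^ n' * ((2 : ℝ) ^ q - 1))| ≤ s * p.1} := by
  have hD : (0:ℝ) < (2:ℝ)^q - 1 := by
    have h2 : (2:ℝ) ≤ 2^q := by
      calc (2:ℝ) = 2^1 := (pow_one 2).symm
      _ ≤ 2^q := pow_le_pow_right₀ one_le_two hq
    linarith
  set D := (2:ℝ)^q - 1 with hDdef
  rw [Set.disjoint_left]
  rintro ⟨ρ, t⟩ ⟨h0, h1, h2⟩ ⟨_, h1', h2'⟩
  simp only at h0 h1 h2 h1' h2'
  set k : ℤ := m * 2^(n'-n) - m' with hk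
  have hk0 : k ≠ 0 := by
    rcases eq_or_lt_of_le hnn with h | h
    · subst h
      have hmm : m ≠ m' := by
        intro hmm; exact hne (by rw [hmm])
      simp only [hk, Nat.sub_self, pow_zero, mul_one]
      exact sub_ne_zero.mpr hmm
    · have hdvd : (2:ℤ) ∣ m * 2^(n'-n) :=
        Dvd.dvd.mul_left (dvd_pow_self 2 (by omega)) m
      have he : Even (m * 2^(n'-n)) := by
        rcases hdvd with ⟨c, hc⟩; exact ⟨c, by omega⟩
      have hodd : Odd k := Even.sub_odd he hm'
      intro h0'
      rw [h0'] at hodd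
      simp [Int.odd_iff] at hodd
  have habs : (1:ℝ) ≤ |(k:ℝ)| := by
    rw [← Int.cast_abs]
    exact_mod_cast Int.one_le_abs hk0
  have h2n : (2:ℝ)^n' = 2^n * 2^(n'-n) := by
    rw [← pow_add]; congr 1; omega
  have hpn : (0:ℝ) < (2:ℝ)^n := by positivity
  have hpn' : (0:ℝ) < (2:ℝ)^n' := by positivity
  have hθ : (m:ℝ)/(2^n*D) - (m':ℝ)/(2^n'*D) = (k:ℝ)/(2^n'*D) := by
    have hkc : (k:ℝ) = (m:ℝ) * 2^(n'-n) - m' := by push_cast [hk]; ring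
    rw [hkc, h2n]
    field_simp
  have key : 1/((2:ℝ)^n' * D) ≤ |(m:ℝ)/(2^n*D) - (m':ℝ)/(2^n'*D)| := by
    rw [hθ, abs_div, abs_of_pos (by positivity : (0:ℝ) < 2^n'*D)]
    gcongr
  have htri : |(m:ℝ)/(2^n*D) - (m':ℝ)/(2^n'*D)| ≤ 2 * s * ρ := by
    have heq : (m:ℝ)/(2^n*D) - (m':ℝ)/(2^n'*D)
        = (t - (m':ℝ)/(2^n'*D)) - (t - (m:ℝ)/(2^n*D)) := by ring
    rw [heq]
    calc |(t - (m':ℝ)/(2^n'*D)) - (t - (m:ℝ)/(2^n*D))|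
        ≤ |t - (m':ℝ)/(2^n'*D)| + |t - (m:ℝ)/(2^n*D)| := abs_sub _ _
      _ ≤ s * ρ + s * ρ := add_le_add h2' h2
      _ = 2 * s * ρ := by ring
  have hsη : 2 * s * η * D < 1 := by
    have h5 := (lt_div_iff₀ (by positivity : (0:ℝ) < 2 * η * D)).mp hs'
    nlinarith
  have hfinal : 2 * s * ρ < 1 / ((2:ℝ)^n' * D) := by
    have hρ : ρ ≤ η / 2^n' := h1'
    have h3 : 2 * s * ρ ≤ 2 * s * η / 2^n' := by
      rw [mul_div_assoc]; nlinarith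
    have h4 : 2 * s * η / 2^n' < 1 / (2^n'*D) := by
      rw [div_lt_div_iff₀ hpn' (by positivity)]
      nlinarith [mul_pos (sub_pos.mpr hsη) hpn']
    linarith
  linarith [key.trans htri]

/-- For fixed `q ≥ 1`, `η > 0` and slope `0 < s < 1/(2η(2^q - 1))`, the truncated sectors
`S_n^s(m/(2^n(2^q-1)))` indexed by pairs `(n,m)` with `n ∈ ℕ` and `m ∈ ℤ` odd are
pairwise disjoint. -/
theorem stmt6 (q : ℕ) (hq : 1 ≤ q) (η s : ℝ) (hη : 0 < η)
    (hs : 0 < s) (hs' : s < 1 / (2 * η * ((2 : ℝ) ^ q - 1)))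
    (n n' : ℕ) (m m' : ℤ) (hm : Odd m) (hm' : Odd m')
    (hne : (n, m) ≠ (n', m')) :
    Disjoint
      {p : ℝ × ℝ | 0 ≤ p.1 ∧ p.1 ≤ η / 2 ^ n ∧
        |p.2 - (m : ℝ) / (2 ^ n * ((2 : ℝ) ^ q - 1))| ≤ s * p.1}
      {p : ℝ × ℝ | 0 ≤ p.1 ∧ p.1 ≤ η / 2 ^ n' ∧
        |p.2 - (m' : ℝ) / (2 ^ n' * ((2 : ℝ) ^ q - 1))| ≤ s * p.1} := by
  rcases le_total n n' with h | h
  · exact aux6 q hq η s hη hs hs' n n' h m m' hm hm' hne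
  · exact (aux6 q hq η s hη hs hs' n' n h m' m hm' hm
      (fun he => hne (by simpa [Prod.ext_iff, and_comm] using he.symm ))).symm
end

section
/- Let d ≥ 2 be an integer. For j = 1, 2 let F_j : ℝ → ℝ be a strictly increasing continuous map such that F_j(x+1) = F_j(x) + d for all x ∈ ℝ, F_j(0) = 0, and F_j is expanding, i.e. there exists μ_j > 1 such that F_j(y) − F_j(x) ≥ μ_j·(y − x) for all x ≤ y. Then there exists a unique map T : ℝ → ℝ which is strictly increasing and surjective (hence a homeomorphism of ℝ), satisfies T(x+1) = T(x) + 1 for all x ∈ ℝ, T(0) = 0, and T ∘ F₁ = F₂ ∘ T. -/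
open Filter Topology BoundedContinuousFunction Function

private lemma natper8 {u : ℝ → ℝ} (hu : ∀ x, u (x + 1) = u x) (n : ℕ) (x : ℝ) :
    u (x + n) = u x := by
  induction n with
  | zero => simp
  | succ k ih =>
    push_cast
    rw [← add_assoc, hu, ih]

/-- Lifted version of the circle conjugacy lemma: if `F₁, F₂ : ℝ → ℝ` are strictly
increasing continuous lifts of degree-`d` expanding covering maps of the circle fixing
the basepoint `0` (i.e. `Fⱼ(x+1) = Fⱼ(x) + d`, `Fⱼ(0) = 0`, and `Fⱼ` expands distances
by a factor `μⱼ > 1`), then there is a unique strictly increasing surjection `T : ℝ → ℝ`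
with `T(x+1) = T(x) + 1`, `T(0) = 0` and `T ∘ F₁ = F₂ ∘ T`. -/
theorem stmt8 (d : ℕ) (hd : 2 ≤ d) (F₁ F₂ : ℝ → ℝ)
    (h₁mono : StrictMono F₁) (h₁cont : Continuous F₁)
    (h₁per : ∀ x : ℝ, F₁ (x + 1) = F₁ x + d) (h₁zero : F₁ 0 = 0)
    (h₁exp : ∃ μ : ℝ, 1 < μ ∧ ∀ x y : ℝ, x ≤ y → μ * (y - x) ≤ F₁ y - F₁ x)
    (h₂mono : StrictMono F₂) (h₂cont : Continuous F₂)
    (h₂per : ∀ x : ℝ, F₂ (x + 1) = F₂ x + d) (h₂zero : F₂ 0 = 0)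
    (h₂exp : ∃ μ : ℝ, 1 < μ ∧ ∀ x y : ℝ, x ≤ y → μ * (y - x) ≤ F₂ y - F₂ x) :
    ∃! T : ℝ → ℝ,
      StrictMono T ∧ Function.Surjective T ∧
      (∀ x : ℝ, T (x + 1) = T x + 1) ∧ T 0 = 0 ∧ T ∘ F₁ = F₂ ∘ T := by
  classical
  obtain ⟨μ₁, hμ₁, hexp₁⟩ := h₁exp
  obtain ⟨μ₂, hμ₂, hexp₂⟩ := h₂exp
  have hμ₂0 : (0:ℝ) < μ₂ := lt_trans one_pos hμ₂
  -- F₂ is surjective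
  have hF₂top : Tendsto F₂ atTop atTop := by
    apply tendsto_atTop_mono' atTop ?_ tendsto_id
    filter_upwards [eventually_ge_atTop (0:ℝ)] with x hx
    have h := hexp₂ 0 x hx
    rw [h₂zero] at h
    simp only [id_eq]
    nlinarith
  have hF₂bot : Tendsto F₂ atBot atBot := by
    apply tendsto_atBot_mono' atBot ?_ tendsto_id
    filter_upwards [eventually_le_atBot (0:ℝ)] with x hx
    have h := hexp₂ x 0 hx
    rw [h₂zero] at h
    simp only [id_eq]
    nlinarith
  have hsurj₂ : Function.Surjective F₂ := h₂cont.surjective hF₂top hF₂bot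
  -- the inverse G₂ of F₂
  set e₂ := StrictMono.orderIsoOfSurjective F₂ h₂mono hsurj₂ with he₂
  set G₂ : ℝ → ℝ := ⇑e₂.symm with hG₂def
  have hGF : ∀ x, G₂ (F₂ x) = x := fun x =>
    StrictMono.orderIsoOfSurjective_symm_apply_self F₂ h₂mono hsurj₂ x
  have hFG : ∀ y, F₂ (G₂ y) = y := fun y =>
    StrictMono.orderIsoOfSurjective_self_symm_apply F₂ h₂mono hsurj₂ y
  have hGcont : Continuous G₂ := e₂.symm.continuous
  have hGmono : Monotone G₂ := e₂.symm.monotone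
  have hGlipkey : ∀ a b : ℝ, a ≤ b → G₂ b - G₂ a ≤ μ₂⁻¹ * (b - a) := by
    intro a b hab
    have h1 : G₂ a ≤ G₂ b := hGmono hab
    have h2 := hexp₂ (G₂ a) (G₂ b) h1
    rw [hFG, hFG] at h2
    rw [inv_mul_eq_div, le_div_iff₀ hμ₂0]
    nlinarith
  have hGlip : ∀ a b : ℝ, dist (G₂ a) (G₂ b) ≤ μ₂⁻¹ * dist a b := by
    intro a b
    rcases le_total a b with hab | hab
    · rw [Real.dist_eq, Real.dist_eq, abs_sub_comm (G₂ a), abs_sub_comm a,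
        abs_of_nonneg (sub_nonneg.2 (hGmono hab)), abs_of_nonneg (sub_nonneg.2 hab)]
      exact hGlipkey a b hab
    · rw [Real.dist_eq, Real.dist_eq,
        abs_of_nonneg (sub_nonneg.2 (hGmono hab)), abs_of_nonneg (sub_nonneg.2 hab)]
      exact hGlipkey b a hab
  have hGshift : ∀ y : ℝ, G₂ (y + d) = G₂ y + 1 := by
    intro y
    have h : F₂ (G₂ y + 1) = y + d := by rw [h₂per, hFG]
    calc G₂ (y + d) = G₂ (F₂ (G₂ y + 1)) := by rw [h]
      _ = G₂ y + 1 := hGF _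
  -- a uniform bound on F₁ - F₂
  have hperdiff : Function.Periodic (fun x => F₁ x - F₂ x) 1 := by
    intro x
    simp only [h₁per, h₂per]
    ring
  obtain ⟨C₀, hC₀⟩ : ∃ C₀ : ℝ, ∀ x, |F₁ x - F₂ x| ≤ C₀ := by
    have hb := hperdiff.isBounded_of_continuous one_ne_zero (h₁cont.sub h₂cont)
    obtain ⟨r, hr⟩ := hb.subset_closedBall 0
    refine ⟨r, fun x => ?_⟩
    have := hr (Set.mem_range_self x)
    simpa [Real.dist_eq] using this
  -- the contraction Φ on bounded continuous functions
  have hΦcont : ∀ u : ℝ →ᵇ ℝ, Continuous fun x => G₂ (F₁ x + u (F₁ x)) - x :=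
    fun u => (hGcont.comp (h₁cont.add (u.continuous.comp h₁cont))).sub continuous_id
  have hΦbound : ∀ (u : ℝ →ᵇ ℝ) (x : ℝ),
      ‖G₂ (F₁ x + u (F₁ x)) - x‖ ≤ μ₂⁻¹ * (C₀ + ‖u‖) := by
    intro u x
    have h1 : ‖G₂ (F₁ x + u (F₁ x)) - x‖ = dist (G₂ (F₁ x + u (F₁ x))) (G₂ (F₂ x)) := by
      rw [hGF, Real.dist_eq, Real.norm_eq_abs]
    rw [h1]
    refine (hGlip _ _).trans (mul_le_mul_of_nonneg_left ?_ (by positivity))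
    rw [Real.dist_eq]
    have h2 := hC₀ x
    have h3 : |u (F₁ x)| ≤ ‖u‖ := by
      simpa [Real.norm_eq_abs] using u.norm_coe_le_norm (F₁ x)
    calc |F₁ x + u (F₁ x) - F₂ x| ≤ |F₁ x - F₂ x| + |u (F₁ x)| := by
          rw [show F₁ x + u (F₁ x) - F₂ x = (F₁ x - F₂ x) + u (F₁ x) by ring]
          exact abs_add_le _ _
      _ ≤ C₀ + ‖u‖ := add_le_add h2 h3
  let Φ : (ℝ →ᵇ ℝ) → (ℝ →ᵇ ℝ) := fun u =>
    ofNormedAddCommGroup (fun x => G₂ (F₁ x + u (F₁ x)) - x) (hΦcont u)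
      (μ₂⁻¹ * (C₀ + ‖u‖)) (hΦbound u)
  have hΦapp : ∀ (u : ℝ →ᵇ ℝ) (x : ℝ), Φ u x = G₂ (F₁ x + u (F₁ x)) - x := fun u x => rfl
  have hμinv : μ₂⁻¹ < 1 := inv_lt_one_of_one_lt₀ hμ₂
  have hμinv0 : (0:ℝ) ≤ μ₂⁻¹ := by positivity
  have hK : ContractingWith ⟨μ₂⁻¹, hμinv0⟩ Φ := by
    constructor
    · exact_mod_cast hμinv
    · refine LipschitzWith.of_dist_le_mul ?_
      intro u v
      rw [BoundedContinuousFunction.dist_le (by positivity)]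
      intro x
      rw [hΦapp, hΦapp]
      have h1 : dist (G₂ (F₁ x + u (F₁ x)) - x) (G₂ (F₁ x + v (F₁ x)) - x)
          = dist (G₂ (F₁ x + u (F₁ x))) (G₂ (F₁ x + v (F₁ x))) := by
        rw [Real.dist_eq, Real.dist_eq]
        ring_nf
      rw [h1]
      calc dist (G₂ (F₁ x + u (F₁ x))) (G₂ (F₁ x + v (F₁ x)))
          ≤ μ₂⁻¹ * dist (F₁ x + u (F₁ x)) (F₁ x + v (F₁ x)) := hGlip _ _
        _ = μ₂⁻¹ * dist (u (F₁ x)) (v (F₁ x)) := by rw [dist_add_left]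
        _ ≤ μ₂⁻¹ * dist u v :=
            mul_le_mul_of_nonneg_left (dist_coe_le_dist _) hμinv0
  -- the fixed point
  set u₀ : ℝ →ᵇ ℝ := ContractingWith.fixedPoint Φ hK with hu₀def
  have hu₀fix : Φ u₀ = u₀ := hK.fixedPoint_isFixedPt
  have hfix : ∀ x, G₂ (F₁ x + u₀ (F₁ x)) - x = u₀ x := by
    intro x
    have h : Φ u₀ x = u₀ x := by rw [hu₀fix]
    rw [hΦapp] at h
    exact h
  set T : ℝ → ℝ := fun x => x + u₀ x with hTdef
  have hTconj : ∀ x, T (F₁ x) = F₂ (T x) := by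
    intro x
    have h := hfix x
    have h2 : G₂ (F₁ x + u₀ (F₁ x)) = x + u₀ x := by linarith
    calc T (F₁ x) = F₁ x + u₀ (F₁ x) := rfl
      _ = F₂ (G₂ (F₁ x + u₀ (F₁ x))) := (hFG _).symm
      _ = F₂ (x + u₀ x) := by rw [h2]
  -- the invariant closed set
  set S : Set (ℝ →ᵇ ℝ) :=
    {u | (∀ x, u (x + 1) = u x) ∧ ∀ x y : ℝ, x ≤ y → x + u x ≤ y + u y} with hSdef
  have hSclosed : IsClosed S := by
    have hrepr : S = {u : ℝ →ᵇ ℝ | ∀ x : ℝ, u (x + 1) = u x}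
        ∩ {u : ℝ →ᵇ ℝ | ∀ x y : ℝ, x ≤ y → x + u x ≤ y + u y} := rfl
    rw [hrepr]
    apply IsClosed.inter
    · simp only [Set.setOf_forall]
      exact isClosed_iInter fun x =>
        isClosed_eq (continuous_eval_const _) (continuous_eval_const _)
    · simp only [Set.setOf_forall]
      refine isClosed_iInter fun x => isClosed_iInter fun y => ?_
      rcases le_or_gt x y with hxy | hxy
      · simp only [hxy, Set.iInter_true]
        exact isClosed_le (continuous_const.add (continuous_eval_const _))
          (continuous_const.add (continuous_eval_const _))
      · have h' : ¬ (x ≤ y) := not_le.2 hxy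
        simp only [h', Set.iInter_false]
        exact isClosed_univ
  have hS0 : (0 : ℝ →ᵇ ℝ) ∈ S := by
    constructor
    · intro x; simp
    · intro x y h; simpa using h
  have hSinv : ∀ u ∈ S, Φ u ∈ S := by
    rintro u ⟨hper, hmon⟩
    constructor
    · intro x
      rw [hΦapp, hΦapp, h₁per]
      have hud : u (F₁ x + d) = u (F₁ x) := natper8 hper d (F₁ x)
      rw [hud, show F₁ x + (d:ℝ) + u (F₁ x) = (F₁ x + u (F₁ x)) + d by ring, hGshift]
      ring
    · intro x y hxy
      have e1 : x + Φ u x = G₂ (F₁ x + u (F₁ x)) := by rw [hΦapp]; ring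
      have e2 : y + Φ u y = G₂ (F₁ y + u (F₁ y)) := by rw [hΦapp]; ring
      rw [e1, e2]
      exact hGmono (hmon (F₁ x) (F₁ y) (h₁mono.monotone hxy))
  have hu₀S : u₀ ∈ S := by
    have htend := hK.tendsto_iterate_fixedPoint (0 : ℝ →ᵇ ℝ)
    refine hSclosed.mem_of_tendsto htend (Eventually.of_forall fun n => ?_)
    induction n with
    | zero => simpa using hS0
    | succ k ih =>
      rw [Function.iterate_succ_apply']
      exact hSinv _ ih
  have hTmono0 : Monotone T := fun x y h => hu₀S.2 x y h
  have hTper : ∀ x, T (x + 1) = T x + 1 := by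
    intro x
    show (x + 1) + u₀ (x + 1) = (x + u₀ x) + 1
    rw [hu₀S.1 x]; ring
  have hTcont : Continuous T := continuous_id.add u₀.continuous
  -- T 0 = 0
  have hfix₂ : ∀ t : ℝ, F₂ t = t → t = 0 := by
    intro t ht
    by_contra h
    rcases lt_or_gt_of_ne h with hlt | hgt
    · have h2 := hexp₂ t 0 hlt.le
      rw [h₂zero, ht] at h2
      nlinarith
    · have h2 := hexp₂ 0 t hgt.le
      rw [h₂zero, ht] at h2
      nlinarith
  have hT0 : T 0 = 0 := by
    refine hfix₂ _ ?_
    have h := hTconj 0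
    rw [h₁zero] at h
    exact h.symm
  -- strict monotonicity
  have hTsm : StrictMono T := by
    intro a b hab
    rcases lt_or_eq_of_le (hTmono0 hab.le) with h | h
    · exact h
    exfalso
    have hiter : ∀ n : ℕ, T (F₁^[n] a) = T (F₁^[n] b) := by
      intro n
      induction n with
      | zero => exact h
      | succ k ih =>
        rw [Function.iterate_succ_apply', Function.iterate_succ_apply', hTconj, hTconj, ih]
    have hμ₁0 : (0:ℝ) < μ₁ := lt_trans one_pos hμ₁
    have hgrow : ∀ n : ℕ, μ₁ ^ n * (b - a) ≤ F₁^[n] b - F₁^[n] a := by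
      intro n
      induction n with
      | zero => simp
      | succ k ih =>
        have hpk : (0:ℝ) < μ₁ ^ k := pow_pos hμ₁0 k
        have hba : (0:ℝ) < b - a := sub_pos.2 hab
        have hle : F₁^[k] a ≤ F₁^[k] b := by nlinarith
        have h2 := hexp₁ _ _ hle
        rw [Function.iterate_succ_apply', Function.iterate_succ_apply']
        calc μ₁ ^ (k+1) * (b - a) = μ₁ * (μ₁ ^ k * (b - a)) := by ring
          _ ≤ μ₁ * (F₁^[k] b - F₁^[k] a) := by nlinarith
          _ ≤ F₁ (F₁^[k] b) - F₁ (F₁^[k] a) := h2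
    obtain ⟨n, hn⟩ : ∃ n : ℕ, 1 ≤ μ₁ ^ n * (b - a) := by
      obtain ⟨n, hn⟩ := pow_unbounded_of_one_lt ((b - a)⁻¹) hμ₁
      refine ⟨n, ?_⟩
      have hba : (0:ℝ) < b - a := sub_pos.2 hab
      have := mul_inv_cancel₀ (ne_of_gt hba)
      nlinarith
    have h1 : F₁^[n] a + 1 ≤ F₁^[n] b := by linarith [hgrow n]
    have h2 := hTmono0 h1
    rw [hTper] at h2
    have h3 := hiter n
    linarith
  -- surjectivity
  have hTsurj : Function.Surjective T := by
    intro y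
    have hb : ∀ x, |u₀ x| ≤ ‖u₀‖ := fun x => by
      simpa [Real.norm_eq_abs] using u₀.norm_coe_le_norm x
    have hnn : (0:ℝ) ≤ ‖u₀‖ := norm_nonneg _
    have ha : T (y - ‖u₀‖ - 1) ≤ y := by
      have h := abs_le.1 (hb (y - ‖u₀‖ - 1))
      show (y - ‖u₀‖ - 1) + u₀ (y - ‖u₀‖ - 1) ≤ y
      linarith
    have hb' : y ≤ T (y + ‖u₀‖ + 1) := by
      have h := abs_le.1 (hb (y + ‖u₀‖ + 1))
      show y ≤ (y + ‖u₀‖ + 1) + u₀ (y + ‖u₀‖ + 1)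
      linarith
    have hle : y - ‖u₀‖ - 1 ≤ y + ‖u₀‖ + 1 := by linarith
    have := intermediate_value_Icc hle hTcont.continuousOn
    obtain ⟨x, _, hx⟩ := this ⟨ha, hb'⟩
    exact ⟨x, hx⟩
  refine ⟨T, ⟨hTsm, hTsurj, hTper, hT0, funext fun x => hTconj x⟩, ?_⟩
  rintro T' ⟨hT'sm, hT'surj, hT'per, hT'0, hT'conj⟩
  have hT'cont : Continuous T' := by
    have := (StrictMono.orderIsoOfSurjective T' hT'sm hT'surj).continuous
    simpa [StrictMono.coe_orderIsoOfSurjective] using this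
  have hu'per : Function.Periodic (fun x => T' x - x) 1 := by
    intro x
    simp only [hT'per]
    ring
  have hu'cont : Continuous fun x => T' x - x := hT'cont.sub continuous_id
  obtain ⟨C, hC⟩ : ∃ C : ℝ, ∀ x, ‖T' x - x‖ ≤ C := by
    have hb := hu'per.isBounded_of_continuous one_ne_zero hu'cont
    obtain ⟨r, hr⟩ := hb.subset_closedBall 0
    refine ⟨r, fun x => ?_⟩
    have := hr (Set.mem_range_self x)
    simpa [Real.dist_eq, Real.norm_eq_abs] using this
  set u' : ℝ →ᵇ ℝ := ofNormedAddCommGroup (fun x => T' x - x) hu'cont C hC with hu'def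
  have hu'app : ∀ x, u' x = T' x - x := fun x => rfl
  have hfix' : Function.IsFixedPt Φ u' := by
    apply BoundedContinuousFunction.ext
    intro x
    rw [hΦapp, hu'app, hu'app]
    have hc : T' (F₁ x) = F₂ (T' x) := congrFun hT'conj x
    rw [show F₁ x + (T' (F₁ x) - F₁ x) = T' (F₁ x) by ring, hc, hGF]
  have heq : u' = u₀ := hK.fixedPoint_unique hfix'
  funext x
  have h : u' x = u₀ x := by rw [heq]
  rw [hu'app] at h
  show T' x = x + u₀ x
  linarith
end

section
/- Let X₀ ⊆ X ⊆ ℂ and X′₀ ⊆ X′ ⊆ ℂ. Suppose X₀ and X′₀ are compact, connected and full in ℂ (i.e. their complements ℂ \ X₀ and ℂ \ X′₀ are connected), and that their topological frontiers satisfy ∂X₀ ⊆ ∂X and ∂X′₀ ⊆ ∂X′. If φ : X → X′ is a homeomorphism (of subspaces of ℂ) satisfying φ(∂X₀) = ∂X′₀, then φ(X₀) = X′₀. -/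
open Complex Finset

/-- Discrete winding sum of a sequence of nonzero complex numbers. -/
noncomputable def Wn (z : ℕ → ℂ) (n : ℕ) : ℂ :=
  ∑ i ∈ Finset.range n, Complex.log (z (i + 1) / z i)

lemma repos {ξ : ℂ} (h : ‖ξ - 1‖ < 1) : 0 < ξ.re := by
  have h2 : ‖ξ - 1‖ ^ 2 < 1 := by
    have := norm_nonneg (ξ - 1)
    nlinarith
  have : (ξ - 1).re ^ 2 + (ξ - 1).im ^ 2 < 1 := by
    rwa [Complex.sq_norm, Complex.normSq_apply, ← pow_two, ← pow_two] at h2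
  simp only [Complex.sub_re, Complex.sub_im, Complex.one_re, Complex.one_im] at this
  nlinarith

lemma exp_Wn (z : ℕ → ℂ) (n : ℕ) (hz : ∀ i ≤ n, z i ≠ 0) :
    Complex.exp (Wn z n) = z n / z 0 := by
  induction n with
  | zero => simp [Wn, div_self (hz 0 le_rfl)]
  | succ n ih =>
      have hzn : ∀ i ≤ n, z i ≠ 0 := fun i hi => hz i (hi.trans n.le_succ)
      have h1 : z (n + 1) ≠ 0 := hz (n + 1) le_rfl
      have h0 : z 0 ≠ 0 := hz 0 (Nat.zero_le _)
      have hn : z n ≠ 0 := hzn n le_rfl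
      rw [Wn, Finset.sum_range_succ, Complex.exp_add]
      rw [show (∑ i ∈ Finset.range n, Complex.log (z (i + 1) / z i)) = Wn z n from rfl]
      rw [ih hzn, Complex.exp_log (div_ne_zero h1 hn)]
      field_simp

lemma Wn_lattice (z : ℕ → ℂ) (n : ℕ) (hz : ∀ i ≤ n, z i ≠ 0) (hloop : z n = z 0) :
    ∃ k : ℤ, Wn z n = k * (2 * Real.pi * Complex.I) := by
  have := exp_Wn z n hz
  rw [hloop, div_self (hz 0 (Nat.zero_le _))] at this
  exact Complex.exp_eq_one_iff.mp this

/-- cancellation of four logs with positive real parts. -/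
lemma log_quad {A B C D : ℂ} (hA : 0 < A.re) (hB : 0 < B.re) (hC : 0 < C.re) (hD : 0 < D.re)
    (h : A * D = B * C) :
    Complex.log A - Complex.log B = Complex.log C - Complex.log D := by
  have hA0 : A ≠ 0 := fun h0 => by simp [h0] at hA
  have hB0 : B ≠ 0 := fun h0 => by simp [h0] at hB
  have hC0 : C ≠ 0 := fun h0 => by simp [h0] at hC
  have hD0 : D ≠ 0 := fun h0 => by simp [h0] at hD
  set Δ := Complex.log A - Complex.log B - Complex.log C + Complex.log D with hΔ
  have hexp : Complex.exp Δ = 1 := by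
    rw [hΔ, Complex.exp_add, Complex.exp_sub, Complex.exp_sub,
      Complex.exp_log hA0, Complex.exp_log hB0, Complex.exp_log hC0, Complex.exp_log hD0]
    field_simp
    linear_combination h
  obtain ⟨k, hk⟩ := Complex.exp_eq_one_iff.mp hexp
  have hIm : Δ.im = A.arg - B.arg - C.arg + D.arg := by
    simp [hΔ, Complex.log_im]
  have harg : ∀ {ξ : ℂ}, 0 < ξ.re → |ξ.arg| < Real.pi / 2 := fun h =>
    Complex.abs_arg_lt_pi_div_two_iff.mpr (Or.inl h)
  have hbound : |Δ.im| < 2 * Real.pi := by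
    rw [hIm]
    have h1 := abs_lt.mp (harg hA)
    have h2 := abs_lt.mp (harg hB)
    have h3 := abs_lt.mp (harg hC)
    have h4 := abs_lt.mp (harg hD)
    have pi_pos := Real.pi_pos
    rw [abs_lt]
    constructor <;> nlinarith [h1.1, h1.2, h2.1, h2.2, h3.1, h3.2, h4.1, h4.2]
  have hkim : Δ.im = (k : ℝ) * (2 * Real.pi) := by
    rw [hk]
    simp
  have hk0 : k = 0 := by
    by_contra hk0
    have : (1 : ℝ) ≤ |(k : ℝ)| := by
      rw [← Int.cast_abs]
      exact_mod_cast Int.one_le_abs (by omega)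
    rw [hkim, abs_mul, abs_of_pos (show (0:ℝ) < 2 * Real.pi by positivity)] at hbound
    nlinarith [Real.pi_pos]
  rw [hk0] at hk
  simp at hk
  rw [hΔ] at hk
  linear_combination hk

/-- Comparison lemma: loops with pointwise-close ratios have the same winding sum. -/
lemma Wn_eq_of_close {z w : ℕ → ℂ} {n : ℕ}
    (hz : ∀ i ≤ n, z i ≠ 0) (hw : ∀ i ≤ n, w i ≠ 0)
    (hloopz : z n = z 0) (hloopw : w n = w 0)
    (hratz : ∀ i < n, 0 < (z (i + 1) / z i).re)
    (hratw : ∀ i < n, 0 < (w (i + 1) / w i).re)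
    (hη : ∀ i ≤ n, 0 < (w i / z i).re) :
    Wn w n = Wn z n := by
  have key : ∀ i < n,
      Complex.log (w (i + 1) / w i) - Complex.log (z (i + 1) / z i)
        = Complex.log (w (i + 1) / z (i + 1)) - Complex.log (w i / z i) := by
    intro i hi
    refine log_quad (hratw i hi) (hratz i hi) (hη (i + 1) hi) (hη i hi.le) ?_
    have hz1 := hz (i + 1) hi
    have hz0 := hz i hi.le
    have hw1 := hw (i + 1) hi
    have hw0 := hw i hi.le
    field_simp
  have : Wn w n - Wn z n = ∑ i ∈ Finset.range n,
      (Complex.log (w (i + 1) / z (i + 1)) - Complex.log (w i / z i)) := by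
    rw [Wn, Wn, ← Finset.sum_sub_distrib]
    exact Finset.sum_congr rfl fun i hi => key i (Finset.mem_range.mp hi)
  rw [Finset.sum_range_sub (fun i => Complex.log (w i / z i)) n, hloopz, hloopw] at this
  have h0 : Wn w n - Wn z n = 0 := by
    rw [this]
    simp
  linear_combination h0

/-- A preconnected set of lattice points `k·2πi` is a subsingleton. -/
lemma lattice_subsingleton {S : Set ℂ} (hS : IsPreconnected S)
    (hsub : ∀ z ∈ S, ∃ k : ℤ, z = (k : ℂ) * (2 * Real.pi * Complex.I)) :
    ∀ a ∈ S, ∀ b ∈ S, a = b := by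
  have pi_pos := Real.pi_pos
  have him : ∀ (k : ℤ), (((k : ℂ) * (2 * Real.pi * Complex.I)).im) = (k : ℝ) * (2 * Real.pi) := by
    intro k
    simp [Complex.mul_im]
  -- image under im
  have hT : IsPreconnected (Complex.im '' S) := hS.image _ Complex.continuous_im.continuousOn
  have hTsub : ∀ x ∈ Complex.im '' S, ∃ k : ℤ, x = (k : ℝ) * (2 * Real.pi) := by
    rintro x ⟨z, hz, rfl⟩
    obtain ⟨k, rfl⟩ := hsub z hz
    exact ⟨k, him k⟩
  have key : ∀ k₁ k₂ : ℤ, ((k₁ : ℝ) * (2 * Real.pi)) ∈ Complex.im '' S →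
      ((k₂ : ℝ) * (2 * Real.pi)) ∈ Complex.im '' S → k₁ < k₂ → False := by
    intro k₁ k₂ h1 h2 hlt
    have hOrd := hT.ordConnected
    have hc : (k₁ : ℝ) * (2 * Real.pi) + Real.pi ∈ Complex.im '' S := by
      apply hOrd.out h1 h2
      constructor
      · linarith
      · have : (k₁ : ℝ) + 1 ≤ (k₂ : ℝ) := by exact_mod_cast hlt
        nlinarith
    obtain ⟨k₃, hk₃⟩ := hTsub _ hc
    have : (2 * k₁ + 1 : ℝ) = 2 * k₃ := by
      have hpi : Real.pi ≠ 0 := ne_of_gt pi_pos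
      have h' : Real.pi * ((2 * (k₁:ℝ) + 1) - 2 * (k₃:ℝ)) = 0 := by linear_combination hk₃
      rcases mul_eq_zero.mp h' with h | h
      · exact absurd h hpi
      · linarith
    have : (2 * k₁ + 1 : ℤ) = 2 * k₃ := by exact_mod_cast this
    omega
  intro a ha b hb
  obtain ⟨k₁, rfl⟩ := hsub a ha
  obtain ⟨k₂, rfl⟩ := hsub b hb
  have h1 : ((k₁ : ℝ) * (2 * Real.pi)) ∈ Complex.im '' S := ⟨_, ha, him k₁⟩
  have h2 : ((k₂ : ℝ) * (2 * Real.pi)) ∈ Complex.im '' S := ⟨_, hb, him k₂⟩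
  rcases lt_trichotomy k₁ k₂ with h | h | h
  · exact absurd (key k₁ k₂ h1 h2 h) (fun x => x)
  · rw [h]
  · exact absurd (key k₂ k₁ h2 h1 h) (fun x => x)

/-- Homotopy invariance of the discrete winding sum. -/
lemma Wn_homotopy (n : ℕ) (Z : ℝ → ℕ → ℂ)
    (hc : ∀ i ≤ n, ContinuousOn (fun s => Z s i) (Set.Icc 0 1))
    (hnz : ∀ s ∈ Set.Icc (0:ℝ) 1, ∀ i ≤ n, Z s i ≠ 0)
    (hrat : ∀ s ∈ Set.Icc (0:ℝ) 1, ∀ i < n, 0 < (Z s (i + 1) / Z s i).re)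
    (hloop : ∀ s ∈ Set.Icc (0:ℝ) 1, Z s n = Z s 0) :
    Wn (Z 1) n = Wn (Z 0) n := by
  set ψ : ℝ → ℂ := fun s => Wn (Z s) n with hψ
  have hcont : ContinuousOn ψ (Set.Icc 0 1) := by
    apply continuousOn_finset_sum
    intro i hi
    have hi' := Finset.mem_range.mp hi
    apply ContinuousOn.clog
    · exact (hc (i + 1) hi').div (hc i hi'.le) (fun s hs => hnz s hs i hi'.le)
    · intro s hs
      exact Complex.mem_slitPlane_iff.mpr (Or.inl (hrat s hs i hi'))
  have hlat : ∀ s ∈ Set.Icc (0:ℝ) 1, ∃ k : ℤ, ψ s = (k : ℂ) * (2 * Real.pi * Complex.I) :=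
    fun s hs => Wn_lattice (Z s) n (hnz s hs) (hloop s hs)
  have hpre : IsPreconnected (ψ '' Set.Icc 0 1) := isPreconnected_Icc.image ψ hcont
  have := lattice_subsingleton hpre (by rintro z ⟨s, hs, rfl⟩; exact hlat s hs)
  exact this _ ⟨1, Set.right_mem_Icc.mpr zero_le_one, rfl⟩ _ ⟨0, Set.left_mem_Icc.mpr zero_le_one, rfl⟩

/-- An "odd" loop has nonzero winding sum. -/
lemma Wn_odd_ne_zero (m : ℕ) (z : ℕ → ℂ)
    (hz : ∀ i ≤ m, z i ≠ 0)
    (hodd : ∀ i ≤ m, z (i + m) = - z i) :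
    Wn z (2 * m) ≠ 0 := by
  have hsplit : Wn z (2 * m) = Wn z m + ∑ i ∈ Finset.range m, Complex.log (z (m + i + 1) / z (m + i)) := by
    rw [Wn, Wn, two_mul, Finset.sum_range_add]
  have hsame : ∀ i ∈ Finset.range m,
      Complex.log (z (m + i + 1) / z (m + i)) = Complex.log (z (i + 1) / z i) := by
    intro i hi
    have hi' := Finset.mem_range.mp hi
    have e1 : z (m + i + 1) = - z (i + 1) := by
      have := hodd (i + 1) hi'
      rw [show i + 1 + m = m + i + 1 by ring] at this
      exact this
    have e2 : z (m + i) = - z i := by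
      have := hodd i hi'.le
      rw [show i + m = m + i by ring] at this
      exact this
    rw [e1, e2, neg_div_neg_eq]
  have hW : Wn z (2 * m) = 2 * Wn z m := by
    rw [hsplit, Finset.sum_congr rfl hsame]
    rw [show (∑ i ∈ Finset.range m, Complex.log (z (i + 1) / z i)) = Wn z m from rfl]
    ring
  have hexp : Complex.exp (Wn z m) = -1 := by
    rw [exp_Wn z m hz]
    have := hodd 0 (Nat.zero_le _)
    simp only [Nat.zero_add] at this
    rw [this, neg_div, div_self (hz 0 (Nat.zero_le _))]
  intro h0
  rw [hW] at h0
  have : Wn z m = 0 := by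
    have := mul_eq_zero.mp h0
    rcases this with h | h
    · norm_num at h
    · exact h
  rw [this, Complex.exp_zero] at hexp
  norm_num at hexp

lemma ratio_re_pos {X Y : ℂ} (hY : Y ≠ 0) (h : ‖X - Y‖ < ‖Y‖) :
    0 < (X / Y).re := by
  apply repos
  have : X / Y - 1 = (X - Y) / Y := by field_simp
  rw [this, norm_div]
  rw [div_lt_one (norm_pos_iff.mpr hY)]
  exact h

/-- Invariance of domain for a closed disk in `ℂ`:
the image of the center of a continuous injective map is an interior point of the image. -/
lemma iod_disk {f : ℂ → ℂ} {c : ℂ} {r : ℝ} (hr : 0 < r)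
    (hf : ContinuousOn f (Metric.closedBall c r))
    (hinj : Set.InjOn f (Metric.closedBall c r)) :
    ∃ ε > 0, Metric.ball (f c) ε ⊆ f '' Metric.closedBall c r := by
  have pi_pos := Real.pi_pos
  -- circle parametrization
  set E : ℝ → ℂ := fun t => Complex.exp (2 * Real.pi * t * Complex.I) with hE
  have hEabs : ∀ t, ‖E t‖ = 1 := by
    intro t
    rw [hE]
    simp only []
    rw [show (2 * (Real.pi:ℂ) * (t:ℝ) * Complex.I) = ((2 * Real.pi * t : ℝ) : ℂ) * Complex.I by
      push_cast; ring]
    exact Complex.norm_exp_ofReal_mul_I _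
  have hEne : ∀ t, E t ≠ 0 := fun t => by
    intro h0; have := hEabs t; rw [h0] at this; simp at this
  have hEcont : Continuous E :=
    Complex.continuous_exp.comp ((continuous_const.mul Complex.continuous_ofReal).mul continuous_const)
  have hEloop : E 1 = E 0 := by
    have h1 : (2 * (Real.pi:ℂ) * ((1:ℝ):ℂ) * Complex.I) = 2 * Real.pi * Complex.I := by
      push_cast; ring
    have h0 : (2 * (Real.pi:ℂ) * ((0:ℝ):ℂ) * Complex.I) = 0 := by push_cast; ring
    rw [hE]; simp only []
    rw [h1, h0, Complex.exp_two_pi_mul_I, Complex.exp_zero]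
  have hEhalf : ∀ t, E (t + 1/2) = - E t := by
    intro t
    rw [hE]; simp only []
    rw [show (2 * (Real.pi:ℂ) * ((t:ℝ) + 1/2 : ℝ) * Complex.I)
        = 2 * Real.pi * (t:ℝ) * Complex.I + Real.pi * Complex.I by push_cast; ring]
    rw [Complex.exp_add, Complex.exp_pi_mul_I]
    ring
  -- the two-variable map
  set Φ : ℝ × ℝ → ℂ := fun p => f (c - p.1 * r * E p.2) with hΦ
  have hdom : ∀ p : ℝ × ℝ, p.1 ∈ Set.Icc (-1:ℝ) 1 → c - p.1 * r * E p.2 ∈ Metric.closedBall c r := by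
    intro p hp
    rw [Metric.mem_closedBall, Complex.dist_eq]
    have : c - p.1 * r * E p.2 - c = -(p.1 * r * E p.2) := by ring
    rw [this, norm_neg]
    rw [norm_mul, norm_mul, hEabs]
    simp only [Complex.norm_real, Real.norm_eq_abs, mul_one]
    calc |p.1| * |(r:ℝ)| ≤ 1 * |r| := by
          apply mul_le_mul_of_nonneg_right _ (abs_nonneg _)
          rw [abs_le]; exact ⟨hp.1, hp.2⟩
      _ = r := by rw [one_mul, abs_of_pos hr]
  set D₀ : Set (ℝ × ℝ) := Set.Icc (-1:ℝ) 1 ×ˢ Set.Icc (0:ℝ) 1 with hD₀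
  have hD₀c : IsCompact D₀ := isCompact_Icc.prod isCompact_Icc
  have hD₀mem : ∀ p ∈ D₀, p.1 ∈ Set.Icc (-1:ℝ) 1 := fun p hp => hp.1
  have hinner : Continuous (fun p : ℝ × ℝ => c - p.1 * r * E p.2) := by
    apply Continuous.sub continuous_const
    apply Continuous.mul
    · apply Continuous.mul
      · exact Complex.continuous_ofReal.comp continuous_fst
      · exact continuous_const
    · exact hEcont.comp continuous_snd
  have hΦcont : ContinuousOn Φ D₀ := by
    apply hf.comp hinner.continuousOn
    intro p hp
    exact hdom p (hD₀mem p hp)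
  -- uniform continuity
  have hUC := Metric.uniformContinuousOn_iff.mp (hD₀c.uniformContinuousOn_of_continuous hΦcont)
  -- the circle avoids the center
  have hccball : c ∈ Metric.closedBall c r := Metric.mem_closedBall_self hr.le
  have hrC : ((r:ℝ):ℂ) ≠ 0 := Complex.ofReal_ne_zero.mpr (ne_of_gt hr)
  have hcircball : ∀ t : ℝ, c - ((-1:ℝ):ℂ) * r * E t ∈ Metric.closedBall c r := by
    intro t
    exact hdom ((-1:ℝ), t) (by constructor <;> norm_num)
  have hcircne : ∀ t : ℝ, Φ ((-1:ℝ), t) ≠ f c := by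
    intro t heq
    have heq2 : c - ((-1:ℝ):ℂ) * r * E t = c := hinj (hcircball t) hccball heq
    have h0 : ((-1:ℝ):ℂ) * r * E t = 0 := by
      have := sub_eq_self.mp heq2
      exact this
    have : ((-1:ℝ):ℂ) ≠ 0 := by norm_num
    exact (mul_ne_zero (mul_ne_zero this hrC) (hEne t)) h0
  -- minimum distance ρ from f c to the circle image
  have hm1 : ∀ t ∈ Set.Icc (0:ℝ) 1, ((-1:ℝ), t) ∈ D₀ := by
    intro t ht
    exact ⟨by constructor <;> norm_num, ht⟩
  have hBcont : ContinuousOn (fun t : ℝ => ‖Φ ((-1:ℝ), t) - f c‖) (Set.Icc 0 1) := by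
    apply continuous_norm.comp_continuousOn
    apply ContinuousOn.sub _ continuousOn_const
    apply hΦcont.comp (Continuous.continuousOn (continuous_const.prodMk continuous_id))
    exact hm1
  obtain ⟨t₀, ht₀, hρmin'⟩ := isCompact_Icc.exists_isMinOn (Set.nonempty_Icc.mpr zero_le_one) hBcont
  have hρmin : ∀ t ∈ Set.Icc (0:ℝ) 1, ‖Φ ((-1:ℝ), t₀) - f c‖ ≤ ‖Φ ((-1:ℝ), t) - f c‖ :=
    fun t ht => hρmin' ht
  set ρ : ℝ := ‖Φ ((-1:ℝ), t₀) - f c‖ with hρdef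
  have hρpos : 0 < ρ := norm_pos_iff.mpr (sub_ne_zero.mpr (hcircne t₀))
  -- minimum separation μ between the circle and the contracted circles
  set D₁ : Set (ℝ × ℝ) := Set.Icc (0:ℝ) 1 ×ˢ Set.Icc (0:ℝ) 1 with hD₁
  have hD₁c : IsCompact D₁ := isCompact_Icc.prod isCompact_Icc
  have hD₁sub : ∀ p : ℝ × ℝ, p ∈ D₁ → p ∈ D₀ := by
    rintro ⟨s, t⟩ ⟨hs, ht⟩
    exact ⟨⟨by linarith [hs.1], hs.2⟩, ht⟩
  have hqne : ∀ p : ℝ × ℝ, p ∈ D₁ → Φ ((-1:ℝ), p.2) - Φ (p.1, p.2) ≠ 0 := by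
    rintro ⟨s, t⟩ ⟨hs, ht⟩ h0
    have heq : Φ ((-1:ℝ), t) = Φ (s, t) := sub_eq_zero.mp h0
    have h1 : c - ((-1:ℝ):ℂ) * r * E t = c - (s:ℝ) * r * E t :=
      hinj (hcircball t) (hdom (s, t) ⟨by linarith [hs.1], hs.2⟩) heq
    have h2 : (((s:ℝ):ℂ) - ((-1:ℝ):ℂ)) * r * E t = 0 := by
      push_cast at h1 ⊢
      linear_combination h1
    have h3 : (((s:ℝ):ℂ) - ((-1:ℝ):ℂ)) ≠ 0 := by
      have : ((s:ℝ):ℂ) - ((-1:ℝ):ℂ) = (((s + 1 : ℝ)):ℂ) := by push_cast; ring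
      rw [this]
      exact Complex.ofReal_ne_zero.mpr (by linarith [hs.1])
    exact (mul_ne_zero (mul_ne_zero h3 hrC) (hEne t)) h2
  have hqcont : ContinuousOn (fun p : ℝ × ℝ => ‖Φ ((-1:ℝ), p.2) - Φ (p.1, p.2)‖) D₁ := by
    apply continuous_norm.comp_continuousOn
    apply ContinuousOn.sub
    · apply hΦcont.comp (Continuous.continuousOn (continuous_const.prodMk continuous_snd))
      intro p hp
      exact hm1 p.2 hp.2
    · exact hΦcont.mono hD₁sub
  have hD₁ne : D₁.Nonempty := ⟨(0, 0), ⟨Set.left_mem_Icc.mpr zero_le_one, Set.left_mem_Icc.mpr zero_le_one⟩⟩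
  obtain ⟨p₁, hp₁, hμmin'⟩ := hD₁c.exists_isMinOn hD₁ne hqcont
  set μ : ℝ := ‖Φ ((-1:ℝ), p₁.2) - Φ (p₁.1, p₁.2)‖ with hμdef
  have hμpos : 0 < μ := norm_pos_iff.mpr (hqne p₁ hp₁)
  have hμmin : ∀ p ∈ D₁, μ ≤ ‖Φ ((-1:ℝ), p.2) - Φ (p.1, p.2)‖ :=
    fun p hp => hμmin' hp
  -- helper
  have ne_of_lb : ∀ {w : ℂ} {a : ℝ}, 0 < a → a ≤ ‖w‖ → w ≠ 0 := by
    intro w a ha hle h0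
    rw [h0] at hle
    simp at hle
    linarith
  -- main claim
  refine ⟨ρ / 8, by positivity, ?_⟩
  intro y hy
  by_contra hyim
  have hyd : ‖y - f c‖ < ρ / 8 := by
    rw [Metric.mem_ball, Complex.dist_eq] at hy
    exact hy
  have hyfc : f c - y ≠ 0 := by
    refine sub_ne_zero.mpr fun h => hyim ⟨c, hccball, h⟩
  -- minimum distance ν from y to the image
  have hνne : ∀ p ∈ D₀, Φ p - y ≠ 0 := by
    intro p hp h0
    exact hyim ⟨c - p.1 * r * E p.2, hdom p (hD₀mem p hp), sub_eq_zero.mp h0⟩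
  have hνcont : ContinuousOn (fun p : ℝ × ℝ => ‖Φ p - y‖) D₀ :=
    continuous_norm.comp_continuousOn (hΦcont.sub continuousOn_const)
  have hD₀ne : D₀.Nonempty := ⟨((-1:ℝ), 0),
    ⟨by constructor <;> norm_num, Set.left_mem_Icc.mpr zero_le_one⟩⟩
  obtain ⟨p₂, hp₂, hνmin'⟩ := hD₀c.exists_isMinOn hD₀ne hνcont
  set ν : ℝ := ‖Φ p₂ - y‖ with hνdef
  have hνpos : 0 < ν := norm_pos_iff.mpr (hνne p₂ hp₂)
  have hνmin : ∀ p ∈ D₀, ν ≤ ‖Φ p - y‖ := fun p hp => hνmin' hp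
  -- mesh setup
  set ε : ℝ := min (min μ ν) ρ / 8 with hεdef
  have hεpos : 0 < ε := by
    have := lt_min (lt_min hμpos hνpos) hρpos
    positivity
  have hεμ : ε ≤ μ / 8 := by
    have : min (min μ ν) ρ ≤ μ := le_trans (min_le_left _ _) (min_le_left _ _)
    rw [hεdef]; linarith
  have hεν : ε ≤ ν / 8 := by
    have : min (min μ ν) ρ ≤ ν := le_trans (min_le_left _ _) (min_le_right _ _)
    rw [hεdef]; linarith
  have hερ : ε ≤ ρ / 8 := by
    have : min (min μ ν) ρ ≤ ρ := min_le_right _ _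
    rw [hεdef]; linarith
  obtain ⟨δ, hδpos, hδ⟩ := hUC ε hεpos
  obtain ⟨m₀, hm₀⟩ := exists_nat_gt (1 / δ)
  set m : ℕ := m₀ + 1 with hmdef
  set n : ℕ := 2 * m with hndef
  have hmpos : 0 < m := Nat.succ_pos _
  have hnposℕ : 0 < n := by omega
  have hnpos : (0:ℝ) < (n:ℝ) := by exact_mod_cast hnposℕ
  have hnne : (n:ℝ) ≠ 0 := ne_of_gt hnpos
  have hnδ : 1 / (n:ℝ) < δ := by
    have h2 : (m₀:ℝ) ≤ (n:ℝ) := by exact_mod_cast (by omega : m₀ ≤ n)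
    have h3 : 1 / δ < (n:ℝ) := lt_of_lt_of_le hm₀ h2
    rw [div_lt_iff₀ hnpos]
    have := (div_lt_iff₀ hδpos).mp h3
    linarith
  set tt : ℕ → ℝ := fun i => (i:ℝ) / (n:ℝ) with httdef
  have htmem : ∀ i ≤ n, tt i ∈ Set.Icc (0:ℝ) 1 := by
    intro i hi
    constructor
    · positivity
    · rw [httdef]
      simp only []
      rw [div_le_one hnpos]
      exact_mod_cast hi
  have htstep : ∀ i : ℕ, tt (i+1) - tt i = 1 / (n:ℝ) := by
    intro i
    rw [httdef]
    simp only []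
    push_cast
    field_simp
    ring
  have httn : tt n = 1 := by rw [httdef]; simp only []; rw [div_self hnne]
  have htt0 : tt 0 = 0 := by rw [httdef]; simp
  have hΦloopt : ∀ s : ℝ, Φ (s, tt n) = Φ (s, tt 0) := by
    intro s
    show f _ = f _
    rw [httn, htt0, hEloop]
  have hΦ0 : ∀ t : ℝ, Φ ((0:ℝ), t) = f c := by
    intro t
    show f _ = f c
    norm_num
  have hstep : ∀ s ∈ Set.Icc (-1:ℝ) 1, ∀ i, i < n →
      ‖Φ (s, tt (i+1)) - Φ (s, tt i)‖ < ε := by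
    intro s hs i hi
    have hmem1 : (s, tt (i+1)) ∈ D₀ := ⟨hs, htmem _ (by omega)⟩
    have hmem0 : (s, tt i) ∈ D₀ := ⟨hs, htmem _ (le_of_lt hi)⟩
    have hdist : dist (s, tt (i+1)) (s, tt i) < δ := by
      rw [Prod.dist_eq]
      simp only [dist_self]
      rw [Real.dist_eq, htstep i, abs_of_pos (by positivity : (0:ℝ) < 1/(n:ℝ))]
      rw [max_eq_right (by positivity : (0:ℝ) ≤ 1/(n:ℝ))]
      exact hnδ
    have := hδ _ hmem1 _ hmem0 hdist
    rwa [Complex.dist_eq] at this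
  -- the three loops
  set zB : ℕ → ℂ := fun i => Φ ((-1:ℝ), tt i) - f c with hzBdef
  set zA : ℕ → ℂ := fun i => Φ ((-1:ℝ), tt i) - y with hzAdef
  set zC : ℕ → ℂ := fun i => Φ ((-1:ℝ), tt i) - Φ ((1:ℝ), tt i) with hzCdef
  have hm1' : (-1:ℝ) ∈ Set.Icc (-1:ℝ) 1 := by constructor <;> norm_num
  have hzBlb : ∀ i ≤ n, ρ ≤ ‖zB i‖ := fun i hi => hρmin _ (htmem i hi)
  have hzAlb : ∀ s ∈ Set.Icc (0:ℝ) 1, ∀ i ≤ n, ν ≤ ‖Φ (-s, tt i) - y‖ := by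
    intro s hs i hi
    refine hνmin ((-s, tt i)) (Set.mk_mem_prod ?_ (htmem i hi))
    exact ⟨by linarith [hs.2], by linarith [hs.1]⟩
  have hzClb : ∀ s ∈ Set.Icc (0:ℝ) 1, ∀ i ≤ n,
      μ ≤ ‖Φ ((-1:ℝ), tt i) - Φ (s, tt i)‖ := by
    intro s hs i hi
    exact hμmin ((s, tt i)) (Set.mk_mem_prod hs (htmem i hi))
  -- loop A: winding 0 by contraction
  have hWA : Wn zA n = 0 := by
    have hmaps : ∀ s ∈ Set.Icc (0:ℝ) 1, (-s : ℝ) ∈ Set.Icc (-1:ℝ) 1 := by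
      intro s hs
      exact ⟨by linarith [hs.2], by linarith [hs.1]⟩
    have h0 := Wn_homotopy n (fun s i => Φ (-s, tt i) - y)
      (by
        intro i hi
        apply ContinuousOn.sub _ continuousOn_const
        apply hΦcont.comp (Continuous.continuousOn ((continuous_neg).prodMk continuous_const))
        intro s hs
        exact Set.mk_mem_prod (hmaps s hs) (htmem i hi))
      (by
        intro s hs i hi
        exact ne_of_lb hνpos (hzAlb s hs i hi))
      (by
        intro s hs i hi
        apply ratio_re_pos (ne_of_lb hνpos (hzAlb s hs i (le_of_lt hi)))
        have heq : (Φ (-s, tt (i+1)) - y) - (Φ (-s, tt i) - y)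
            = Φ (-s, tt (i+1)) - Φ (-s, tt i) := by ring
        rw [heq]
        calc ‖Φ (-s, tt (i+1)) - Φ (-s, tt i)‖ < ε := hstep (-s) (hmaps s hs) i hi
          _ ≤ ν / 8 := hεν
          _ < ν := by linarith
          _ ≤ _ := hzAlb s hs i (le_of_lt hi))
      (by
        intro s hs
        show Φ (-s, tt n) - y = Φ (-s, tt 0) - y
        rw [hΦloopt])
    have hb1 : ((fun s : ℝ => fun i => Φ (-s, tt i) - y) 1) = zA := by
      funext i
      show Φ (-(1:ℝ), tt i) - y = zA i
      norm_num [hzAdef]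
    have hb0 : ((fun s : ℝ => fun i => Φ (-s, tt i) - y) 0) = (fun _ => f c - y) := by
      funext i
      show Φ (-(0:ℝ), tt i) - y = f c - y
      rw [neg_zero, hΦ0]
    beta_reduce at hb1 hb0
    rw [hb1, hb0] at h0
    rw [h0, Wn]
    apply Finset.sum_eq_zero
    intro i hi
    rw [div_self hyfc, Complex.log_one]
  -- loop A vs loop B
  have hWAB : Wn zA n = Wn zB n := by
    apply Wn_eq_of_close (n := n)
    · intro i hi
      exact ne_of_lb hρpos (hzBlb i hi)
    · intro i hi
      apply ne_of_lb hνpos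
      have := hzAlb 1 (Set.right_mem_Icc.mpr zero_le_one) i hi
      rwa [show (-(1:ℝ)) = (-1:ℝ) by norm_num] at this
    · rw [hzBdef]; simp only []; rw [hΦloopt]
    · rw [hzAdef]; simp only []; rw [hΦloopt]
    · intro i hi
      apply ratio_re_pos (ne_of_lb hρpos (hzBlb i (le_of_lt hi)))
      have heq : zB (i+1) - zB i = Φ ((-1:ℝ), tt (i+1)) - Φ ((-1:ℝ), tt i) := by
        rw [hzBdef]; ring
      rw [heq]
      calc ‖Φ ((-1:ℝ), tt (i+1)) - Φ ((-1:ℝ), tt i)‖ < ε := hstep _ hm1' i hi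
        _ ≤ ρ / 8 := hερ
        _ < ρ := by linarith
        _ ≤ _ := hzBlb i (le_of_lt hi)
    · intro i hi
      apply ratio_re_pos
      · apply ne_of_lb hνpos
        have := hzAlb 1 (Set.right_mem_Icc.mpr zero_le_one) i (le_of_lt hi)
        rwa [show (-(1:ℝ)) = (-1:ℝ) by norm_num] at this
      · have heq : zA (i+1) - zA i = Φ ((-1:ℝ), tt (i+1)) - Φ ((-1:ℝ), tt i) := by
          rw [hzAdef]; ring
        rw [heq]
        have hlbA : ν ≤ ‖zA i‖ := by
          have := hzAlb 1 (Set.right_mem_Icc.mpr zero_le_one) i (le_of_lt hi)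
          rwa [show (-(1:ℝ)) = (-1:ℝ) by norm_num] at this
        calc ‖Φ ((-1:ℝ), tt (i+1)) - Φ ((-1:ℝ), tt i)‖ < ε := hstep _ hm1' i hi
          _ ≤ ν / 8 := hεν
          _ < ν := by linarith
          _ ≤ _ := hlbA
    · intro i hi
      apply ratio_re_pos (ne_of_lb hρpos (hzBlb i hi))
      have heq : zA i - zB i = f c - y := by
        rw [hzAdef, hzBdef]; ring
      rw [heq]
      calc ‖f c - y‖ = ‖y - f c‖ := by rw [← norm_neg]; ring_nf
        _ < ρ / 8 := hyd
        _ < ρ := by linarith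
        _ ≤ _ := hzBlb i hi
  -- loop B vs loop C
  have hWBC : Wn zB n = Wn zC n := by
    have h0 := Wn_homotopy n (fun s i => Φ ((-1:ℝ), tt i) - Φ (s, tt i))
      (by
        intro i hi
        apply ContinuousOn.sub continuousOn_const
        apply hΦcont.comp (Continuous.continuousOn (continuous_id.prodMk continuous_const))
        intro s hs
        exact Set.mk_mem_prod ⟨show (-1:ℝ) ≤ s by linarith [hs.1], show s ≤ 1 from hs.2⟩ (htmem i hi))
      (by
        intro s hs i hi
        exact ne_of_lb hμpos (hzClb s hs i hi))
      (by
        intro s hs i hi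
        apply ratio_re_pos (ne_of_lb hμpos (hzClb s hs i (le_of_lt hi)))
        have heq : (Φ ((-1:ℝ), tt (i+1)) - Φ (s, tt (i+1))) - (Φ ((-1:ℝ), tt i) - Φ (s, tt i))
            = (Φ ((-1:ℝ), tt (i+1)) - Φ ((-1:ℝ), tt i)) - (Φ (s, tt (i+1)) - Φ (s, tt i)) := by
          ring
        rw [heq]
        have hs' : s ∈ Set.Icc (-1:ℝ) 1 := ⟨by linarith [hs.1], hs.2⟩
        calc ‖(Φ ((-1:ℝ), tt (i+1)) - Φ ((-1:ℝ), tt i)) - (Φ (s, tt (i+1)) - Φ (s, tt i))‖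
            ≤ ‖Φ ((-1:ℝ), tt (i+1)) - Φ ((-1:ℝ), tt i)‖
              + ‖Φ (s, tt (i+1)) - Φ (s, tt i)‖ := by
              apply norm_sub_le
          _ < ε + ε := add_lt_add (hstep _ hm1' i hi) (hstep s hs' i hi)
          _ ≤ μ / 8 + μ / 8 := add_le_add hεμ hεμ
          _ < μ := by linarith
          _ ≤ _ := hzClb s hs i (le_of_lt hi))
      (by
        intro s hs
        show Φ ((-1:ℝ), tt n) - Φ (s, tt n) = Φ ((-1:ℝ), tt 0) - Φ (s, tt 0)
        rw [hΦloopt, hΦloopt])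
    have hb1 : ((fun s : ℝ => fun i => Φ ((-1:ℝ), tt i) - Φ (s, tt i)) 1) = zC := by
      funext i
      show Φ ((-1:ℝ), tt i) - Φ ((1:ℝ), tt i) = zC i
      rw [hzCdef]
    have hb0 : ((fun s : ℝ => fun i => Φ ((-1:ℝ), tt i) - Φ (s, tt i)) 0) = zB := by
      funext i
      show Φ ((-1:ℝ), tt i) - Φ ((0:ℝ), tt i) = zB i
      rw [hzBdef, hΦ0]
    beta_reduce at hb1 hb0
    rw [hb1, hb0] at h0
    rw [h0]
  -- loop C has nonzero winding
  have hWC : Wn zC n ≠ 0 := by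
    rw [hndef]
    apply Wn_odd_ne_zero m
    · intro i hi
      apply ne_of_lb hμpos
      exact hzClb 1 (Set.right_mem_Icc.mpr zero_le_one) i (by omega)
    · intro i hi
      have hthalf : tt (i + m) = tt i + 1/2 := by
        rw [httdef]
        simp only []
        rw [hndef]
        push_cast
        have hmne : (m:ℝ) ≠ 0 := by exact_mod_cast Nat.pos_iff_ne_zero.mp hmpos
        field_simp
      have hE1 : Φ ((-1:ℝ), tt (i+m)) = Φ ((1:ℝ), tt i) := by
        show f _ = f _
        rw [hthalf, hEhalf]
        norm_num
      have hE2 : Φ ((1:ℝ), tt (i+m)) = Φ ((-1:ℝ), tt i) := by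
        show f _ = f _
        rw [hthalf, hEhalf]
        norm_num
      rw [hzCdef]
      simp only []
      rw [hE1, hE2]
      ring
  exact hWC (by rw [← hWBC, ← hWAB, hWA])

/-- One inclusion of the main theorem: the image of `X₀` is contained in `X₀'`. -/
lemma stmt10_aux (X₀ X X₀' X' : Set ℂ)
    (hX₀X : X₀ ⊆ X) (hX₀'X' : X₀' ⊆ X')
    (hcomp : IsCompact X₀) (hcomp' : IsCompact X₀') (hfull' : IsConnected X₀'ᶜ)
    (φ : X ≃ₜ X')
    (hφ : (fun x : X => (φ x : ℂ)) '' {x : X | (x : ℂ) ∈ frontier X₀} = frontier X₀') :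
    ∀ x : X, (x : ℂ) ∈ X₀ → (φ x : ℂ) ∈ X₀' := by
  classical
  intro x₀ hx₀
  by_contra hout
  set f : X → ℂ := fun x => (φ x : ℂ) with hfdef
  set g : X' → ℂ := fun y => (φ.symm y : ℂ) with hgdef
  have hfc : Continuous f := continuous_subtype_val.comp φ.continuous
  have hgc : Continuous g := continuous_subtype_val.comp φ.symm.continuous
  -- compactness of subtype preimages
  have hpre' : IsCompact {y : X' | (y : ℂ) ∈ X₀'} := by
    have himg : Subtype.val '' (Subtype.val ⁻¹' X₀' : Set X') = X₀' := by
      rw [Set.image_preimage_eq_inter_range, Subtype.range_coe]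
      exact Set.inter_eq_self_of_subset_left hX₀'X'
    exact Topology.IsEmbedding.subtypeVal.isCompact_iff.mpr (by rw [show Subtype.val '' {y : X' | (y : ℂ) ∈ X₀'} = X₀' from himg]; exact hcomp')
  have hpre : IsCompact {x : X | (x : ℂ) ∈ X₀} := by
    have himg : Subtype.val '' (Subtype.val ⁻¹' X₀ : Set X) = X₀ := by
      rw [Set.image_preimage_eq_inter_range, Subtype.range_coe]
      exact Set.inter_eq_self_of_subset_left hX₀X
    exact Topology.IsEmbedding.subtypeVal.isCompact_iff.mpr (by rw [show Subtype.val '' {x : X | (x : ℂ) ∈ X₀} = X₀ from himg]; exact hcomp)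
  set J : Set ℂ := g '' {y : X' | (y : ℂ) ∈ X₀'} with hJdef
  have hJcpt : IsCompact J := hpre'.image hgc
  set K : Set ℂ := f '' {x : X | (x : ℂ) ∈ X₀} with hKdef
  have hKcpt : IsCompact K := hpre.image hfc
  -- membership transfer
  have hJiff : ∀ x : X, (x : ℂ) ∈ J ↔ f x ∈ X₀' := by
    intro x
    constructor
    · rintro ⟨y, hy, hgy⟩
      have : φ.symm y = x := Subtype.coe_injective hgy
      have hyx : y = φ x := by rw [← this, Homeomorph.apply_symm_apply]
      rw [hfdef]
      simp only []
      rw [← hyx]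
      exact hy
    · intro h
      refine ⟨φ x, h, ?_⟩
      rw [hgdef]
      simp only []
      rw [Homeomorph.symm_apply_apply]
  -- frontier of X₀ is inside J
  have hfrJ : frontier X₀ ⊆ J := by
    intro w hw
    have hwX₀ : w ∈ X₀ := hcomp.isClosed.frontier_subset hw
    set x : X := ⟨w, hX₀X hwX₀⟩ with hxdef
    have hfx : f x ∈ frontier X₀' := by
      rw [← hφ]
      exact ⟨x, hw, rfl⟩
    have : f x ∈ X₀' := hcomp'.isClosed.frontier_subset hfx
    exact (hJiff x).mpr this
  -- points of X₀ off J are interior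
  have hPint : ∀ w, w ∈ X₀ → w ∉ J → w ∈ interior X₀ := by
    intro w hw hwJ
    by_contra hint
    exact hwJ (hfrJ (by rw [hcomp.isClosed.frontier_eq]; exact ⟨hw, hint⟩))
  set Pset : Set ℂ := interior X₀ ∩ Jᶜ with hPdef
  have hPopen : IsOpen Pset := isOpen_interior.inter hJcpt.isClosed.isOpen_compl
  have hPsubX : Pset ⊆ X := fun w hw => hX₀X (interior_subset hw.1)
  set M : Set ℂ := f '' {x : X | (x : ℂ) ∈ X₀ ∧ (x : ℂ) ∉ J} with hMdef
  -- the image of the interior part is open (invariance of domain)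
  have hMopen : IsOpen M := by
    rw [Metric.isOpen_iff]
    rintro w ⟨x, ⟨hx1, hx2⟩, rfl⟩
    have hwP : (x : ℂ) ∈ Pset := ⟨hPint _ hx1 hx2, hx2⟩
    obtain ⟨r, hrpos, hball⟩ := Metric.isOpen_iff.mp hPopen _ hwP
    have hcb : Metric.closedBall (x : ℂ) (r/2) ⊆ Pset :=
      le_trans (Metric.closedBall_subset_ball (by linarith)) hball
    have hcbX : Metric.closedBall (x : ℂ) (r/2) ⊆ X := fun z hz => hPsubX (hcb hz)
    set F : ℂ → ℂ := fun z => if h : z ∈ X then f ⟨z, h⟩ else 0 with hFdef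
    have hFf : ∀ z (hz : z ∈ X), F z = f ⟨z, hz⟩ := by
      intro z hz
      rw [hFdef]
      simp only []
      rw [dif_pos hz]
    have hFcont : ContinuousOn F (Metric.closedBall (x : ℂ) (r/2)) := by
      rw [continuousOn_iff_continuous_restrict]
      have hres : Set.domRestrict (Metric.closedBall (x : ℂ) (r/2)) F
          = f ∘ (fun z : (Metric.closedBall (x : ℂ) (r/2) : Set ℂ) => (⟨z.1, hcbX z.2⟩ : X)) := by
        funext z
        exact hFf z.1 (hcbX z.2)
      rw [hres]
      exact hfc.comp (Continuous.subtype_mk continuous_subtype_val _)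
    have hFinj : Set.InjOn F (Metric.closedBall (x : ℂ) (r/2)) := by
      intro a ha b hb hab
      rw [hFf a (hcbX ha), hFf b (hcbX hb)] at hab
      have h1 : φ ⟨a, hcbX ha⟩ = φ ⟨b, hcbX hb⟩ := Subtype.coe_injective hab
      have h2 : (⟨a, hcbX ha⟩ : X) = ⟨b, hcbX hb⟩ := φ.injective h1
      exact congrArg Subtype.val h2
    obtain ⟨ε, hεpos, hεball⟩ := iod_disk (by positivity : (0:ℝ) < r/2) hFcont hFinj
    refine ⟨ε, hεpos, ?_⟩
    have hFx : F (x : ℂ) = f x := by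
      rw [hFf _ (hcbX (Metric.mem_closedBall_self (by positivity)))]
    rw [← hFx]
    refine le_trans hεball ?_
    rintro w' ⟨z, hz, rfl⟩
    have hzP := hcb hz
    exact ⟨⟨z, hcbX hz⟩, ⟨interior_subset hzP.1, hzP.2⟩, (hFf z (hcbX hz)).symm⟩
  -- M avoids X₀', and K off X₀' is inside M
  have hMsub : M ⊆ X₀'ᶜ := by
    rintro w ⟨x, ⟨hx1, hx2⟩, rfl⟩
    exact fun h => hx2 ((hJiff x).mpr h)
  have hKM : ∀ w ∈ K, w ∉ X₀' → w ∈ M := by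
    rintro w ⟨x, hx, rfl⟩ hw
    exact ⟨x, ⟨hx, fun h => hw ((hJiff x).mp h)⟩, rfl⟩
  have hMK : M ⊆ K := by
    rintro w ⟨x, hx, rfl⟩
    exact ⟨x, hx.1, rfl⟩
  have hclM : closure M ⊆ K := closure_minimal hMK hKcpt.isClosed
  -- the contradiction via connectedness of the complement of X₀'
  have hm₀ : f x₀ ∈ M := hKM _ ⟨x₀, hx₀, rfl⟩ hout
  obtain ⟨R₁, hR₁⟩ := hcomp'.isBounded.subset_closedBall 0
  obtain ⟨R₂, hR₂⟩ := hKcpt.isBounded.subset_closedBall 0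
  set R : ℝ := |R₁| + |R₂| + 1 with hRdef
  have hzout : ∀ (S : Set ℂ), S ⊆ Metric.closedBall 0 R₁ ∨ S ⊆ Metric.closedBall 0 R₂ →
      ((R : ℝ) : ℂ) ∉ S := by
    intro S hS hmem
    have h1 : ‖((R : ℝ) : ℂ)‖ = R := by
      rw [Complex.norm_real, Real.norm_eq_abs]
      rw [hRdef]
      rw [abs_of_pos (by positivity)]
    rcases hS with hS | hS
    · have := hS hmem
      rw [Metric.mem_closedBall, Complex.dist_eq, sub_zero, h1] at this
      have : R ≤ |R₁| := le_trans this (le_abs_self R₁)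
      rw [hRdef] at this
      have := abs_nonneg R₂
      linarith
    · have := hS hmem
      rw [Metric.mem_closedBall, Complex.dist_eq, sub_zero, h1] at this
      have : R ≤ |R₂| := le_trans this (le_abs_self R₂)
      rw [hRdef] at this
      have := abs_nonneg R₁
      linarith
  have hnoncover := hfull'.isPreconnected M (closure M)ᶜ hMopen (isClosed_closure.isOpen_compl)
    (by
      intro w hw
      by_cases hwM : w ∈ closure M
      · left
        exact hKM w (hclM hwM) hw
      · right
        exact hwM)
    ⟨f x₀, hMsub hm₀, hm₀⟩
    ⟨((R : ℝ) : ℂ),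
      fun h => hzout X₀' (Or.inl hR₁) h,
      fun h => hzout (closure M) (Or.inr (le_trans hclM hR₂)) h⟩
  obtain ⟨w, _, hwM, hwMc⟩ := hnoncover
  exact hwMc (subset_closure hwM)


/-- Topological lemma: if `X₀ ⊆ X ⊆ ℂ` and `X₀' ⊆ X' ⊆ ℂ` with `X₀`, `X₀'` compact,
connected and full (complement connected), `∂X₀ ⊆ ∂X`, `∂X₀' ⊆ ∂X'`, and
`φ : X → X'` is a homeomorphism with `φ(∂X₀) = ∂X₀'`, then `φ(X₀) = X₀'`. -/
theorem stmt10 (X₀ X X₀' X' : Set ℂ)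
    (hX₀X : X₀ ⊆ X) (hX₀'X' : X₀' ⊆ X')
    (hcomp : IsCompact X₀) (hconn : IsConnected X₀) (hfull : IsConnected X₀ᶜ)
    (hcomp' : IsCompact X₀') (hconn' : IsConnected X₀') (hfull' : IsConnected X₀'ᶜ)
    (hfr : frontier X₀ ⊆ frontier X) (hfr' : frontier X₀' ⊆ frontier X')
    (φ : X ≃ₜ X')
    (hφ : (fun x : X => (φ x : ℂ)) '' {x : X | (x : ℂ) ∈ frontier X₀} = frontier X₀') :
    (fun x : X => (φ x : ℂ)) '' {x : X | (x : ℂ) ∈ X₀} = X₀' := by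
  have hφsymm : (fun y : X' => (φ.symm y : ℂ)) '' {y : X' | (y : ℂ) ∈ frontier X₀'} = frontier X₀ := by
    ext w
    constructor
    · rintro ⟨y, hy, rfl⟩
      rw [← hφ] at hy
      obtain ⟨x, hx, hfx⟩ := hy
      have hyx : y = φ x := Subtype.coe_injective hfx.symm
      show ((φ.symm y : X) : ℂ) ∈ frontier X₀
      rw [hyx, Homeomorph.symm_apply_apply]
      exact hx
    · intro hw
      have hwX₀ : w ∈ X₀ := hcomp.isClosed.frontier_subset hw
      refine ⟨φ ⟨w, hX₀X hwX₀⟩, ?_, ?_⟩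
      · show ((φ ⟨w, hX₀X hwX₀⟩ : X') : ℂ) ∈ frontier X₀'
        rw [← hφ]
        exact ⟨⟨w, hX₀X hwX₀⟩, hw, rfl⟩
      · show ((φ.symm (φ ⟨w, hX₀X hwX₀⟩) : X) : ℂ) = w
        rw [Homeomorph.symm_apply_apply]
  apply Set.Subset.antisymm
  · rintro w ⟨x, hx, rfl⟩
    exact stmt10_aux X₀ X X₀' X' hX₀X hX₀'X' hcomp hcomp' hfull' φ hφ x hx
  · intro w hw
    have hmem := stmt10_aux X₀' X' X₀ X hX₀'X' hX₀X hcomp' hcomp hfull φ.symm hφsymm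
      ⟨w, hX₀'X' hw⟩ hw
    refine ⟨φ.symm ⟨w, hX₀'X' hw⟩, hmem, ?_⟩
    show ((φ (φ.symm ⟨w, hX₀'X' hw⟩) : X') : ℂ) = w
    rw [Homeomorph.apply_symm_apply]
end
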